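/- Let s = (1, 0, −1) ∈ ℝ³ and let A₁ and A₂ be the 3×3 real matrices A₁ = [[0, 1, 0], [2/3, 0, 1/3], [1, 0, 0]] and A₂ = [[0, 1, 0], [1/3, 0, 2/3], [0, 1, 0]]. Define f(A) = (1/2)·sᵀ(2I − A)^{−⊤}(I + D^in(A) − 2A)(2I − A)^{−1} s, where D^in(A) is the diagonal matrix whose v-th diagonal entry is the v-th column sum of A. Then f((A₁ + A₂)/2) > (f(A₁) + f(A₂))/2; in particular, the D-Dir objective is not matrix-convex. -/

import Mathlib

open Matrix

/-- The diagonal in-degree matrix of `A`: the `v`-th diagonal entry is the `v`-th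
column sum of `A`. -/
noncomputable def dIn (A : Matrix (Fin 3) (Fin 3) ℝ) : Matrix (Fin 3) (Fin 3) ℝ :=
  Matrix.diagonal (fun v => ∑ u, A u v)

/-- The D-Dir objective at opinion vector `s`:
`f(A) = (1/2) sᵀ (2I − A)⁻ᵀ (I + Dⁱⁿ − 2A) (2I − A)⁻¹ s`. -/
noncomputable def dDir (s : Fin 3 → ℝ) (A : Matrix (Fin 3) (Fin 3) ℝ) : ℝ :=
  (1 / 2) * (s ⬝ᵥ (((2 - A)⁻¹)ᵀ * (1 + dIn A - 2 * A) * (2 - A)⁻¹).mulVec s)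

lemma two_mat_eq : (2 : Matrix (Fin 3) (Fin 3) ℝ) = !![2,0,0;0,2,0;0,0,2] := by
  have : (2 : Matrix (Fin 3) (Fin 3) ℝ) = 1 + 1 := by norm_num
  rw [this]; ext i j; fin_cases i <;> fin_cases j <;>
    simp [Matrix.one_apply, Matrix.vecHead, Matrix.vecTail] <;> norm_num

lemma inv1 : ((2 : Matrix (Fin 3) (Fin 3) ℝ) - !![0, 1, 0; 2/3, 0, 1/3; 1, 0, 0])⁻¹ =
    !![12/19, 6/19, 1/19; 5/19, 12/19, 2/19; 6/19, 3/19, 10/19] := by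
  apply Matrix.inv_eq_right_inv
  rw [two_mat_eq]
  ext i j; fin_cases i <;> fin_cases j <;>
    simp [Matrix.mul_apply, Fin.sum_univ_three, Matrix.one_apply, Matrix.vecHead,
      Matrix.vecTail] <;> norm_num

lemma inv2 : ((2 : Matrix (Fin 3) (Fin 3) ℝ) - !![0, 1, 0; 1/3, 0, 2/3; 0, 1, 0])⁻¹ =
    !![5/9, 1/3, 1/9; 1/9, 2/3, 2/9; 1/18, 1/3, 11/18] := by
  apply Matrix.inv_eq_right_inv
  rw [two_mat_eq]
  ext i j; fin_cases i <;> fin_cases j <;>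
    simp [Matrix.mul_apply, Fin.sum_univ_three, Matrix.one_apply, Matrix.vecHead,
      Matrix.vecTail] <;> norm_num

lemma inv3 : ((2 : Matrix (Fin 3) (Fin 3) ℝ) - !![0, 1, 0; 1/2, 0, 1/2; 1/2, 1/2, 0])⁻¹ =
    !![3/5, 8/25, 2/25; 1/5, 16/25, 4/25; 1/5, 6/25, 14/25] := by
  apply Matrix.inv_eq_right_inv
  rw [two_mat_eq]
  ext i j; fin_cases i <;> fin_cases j <;>
    simp [Matrix.mul_apply, Fin.sum_univ_three, Matrix.one_apply, Matrix.vecHead,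
      Matrix.vecTail] <;> norm_num

lemma mid1 : (1 + dIn !![0, 1, 0; 2/3, 0, 1/3; 1, 0, 0]
      - 2 * !![0, 1, 0; 2/3, 0, 1/3; 1, 0, 0] : Matrix (Fin 3) (Fin 3) ℝ) =
    !![8/3, -2, 0; -4/3, 2, -2/3; -2, 0, 4/3] := by
  rw [two_mat_eq]
  ext i j; fin_cases i <;> fin_cases j <;>
    simp [dIn, Matrix.diagonal_apply, Matrix.mul_apply, Fin.sum_univ_three,
      Matrix.one_apply, Matrix.vecHead, Matrix.vecTail] <;> norm_num

lemma mid2 : (1 + dIn !![0, 1, 0; 1/3, 0, 2/3; 0, 1, 0]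
      - 2 * !![0, 1, 0; 1/3, 0, 2/3; 0, 1, 0] : Matrix (Fin 3) (Fin 3) ℝ) =
    !![4/3, -2, 0; -2/3, 3, -4/3; 0, -2, 5/3] := by
  rw [two_mat_eq]
  ext i j; fin_cases i <;> fin_cases j <;>
    simp [dIn, Matrix.diagonal_apply, Matrix.mul_apply, Fin.sum_univ_three,
      Matrix.one_apply, Matrix.vecHead, Matrix.vecTail] <;> norm_num

lemma mid3 : (1 + dIn !![0, 1, 0; 1/2, 0, 1/2; 1/2, 1/2, 0]
      - 2 * !![0, 1, 0; 1/2, 0, 1/2; 1/2, 1/2, 0] : Matrix (Fin 3) (Fin 3) ℝ) =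
    !![2, -2, 0; -1, 5/2, -1; -1, -1, 3/2] := by
  rw [two_mat_eq]
  ext i j; fin_cases i <;> fin_cases j <;>
    simp [dIn, Matrix.diagonal_apply, Matrix.mul_apply, Fin.sum_univ_three,
      Matrix.one_apply, Matrix.vecHead, Matrix.vecTail] <;> norm_num

lemma tr (a b c d e f g h i : ℝ) :
    (!![a, b, c; d, e, f; g, h, i])ᵀ = !![a, d, g; b, e, h; c, f, i] := by
  ext x y; fin_cases x <;> fin_cases y <;> rfl

lemma val1 : dDir ![1, 0, -1] !![0, 1, 0; 2/3, 0, 1/3; 1, 0, 0] = 174/361 := by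
  rw [dDir, inv1, mid1, tr]
  norm_num [Matrix.mulVec, Matrix.mul_apply, dotProduct, Fin.sum_univ_three,
    Matrix.vecHead, Matrix.vecTail, Matrix.cons_val_two]

lemma val2 : dDir ![1, 0, -1] !![0, 1, 0; 1/3, 0, 2/3; 0, 1, 0] = 10/27 := by
  rw [dDir, inv2, mid2, tr]
  norm_num [Matrix.mulVec, Matrix.mul_apply, dotProduct, Fin.sum_univ_three,
    Matrix.vecHead, Matrix.vecTail, Matrix.cons_val_two]

lemma val3 : dDir ![1, 0, -1] !![0, 1, 0; 1/2, 0, 1/2; 1/2, 1/2, 0] = 279/625 := by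
  rw [dDir, inv3, mid3, tr]
  norm_num [Matrix.mulVec, Matrix.mul_apply, dotProduct, Fin.sum_univ_three,
    Matrix.vecHead, Matrix.vecTail, Matrix.cons_val_two]

lemma mid_eq : ((1 : ℝ) / 2) • ((!![0, 1, 0; 2/3, 0, 1/3; 1, 0, 0] : Matrix (Fin 3) (Fin 3) ℝ)
    + !![0, 1, 0; 1/3, 0, 2/3; 0, 1, 0]) = !![0, 1, 0; 1/2, 0, 1/2; 1/2, 1/2, 0] := by
  ext i j; fin_cases i <;> fin_cases j <;>
    simp [Matrix.add_apply, Matrix.smul_apply, Matrix.vecHead, Matrix.vecTail] <;> norm_num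

/-- Counterexample to the matrix-convexity of the D-Dir objective. -/
theorem dDir_not_convex :
    let s : Fin 3 → ℝ := ![1, 0, -1]
    let A1 : Matrix (Fin 3) (Fin 3) ℝ := !![0, 1, 0; 2/3, 0, 1/3; 1, 0, 0]
    let A2 : Matrix (Fin 3) (Fin 3) ℝ := !![0, 1, 0; 1/3, 0, 2/3; 0, 1, 0]
    dDir s (((1 : ℝ) / 2) • (A1 + A2)) > (dDir s A1 + dDir s A2) / 2 ∧
      ¬ ∀ (B1 B2 : Matrix (Fin 3) (Fin 3) ℝ) (t : ℝ), 0 ≤ t → t ≤ 1 →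
          dDir s (t • B1 + (1 - t) • B2) ≤ t * dDir s B1 + (1 - t) * dDir s B2 := by
  intro s A1 A2
  have key : dDir s (((1 : ℝ) / 2) • (A1 + A2)) > (dDir s A1 + dDir s A2) / 2 := by
    show dDir ![1, 0, -1] (((1 : ℝ) / 2) • (A1 + A2)) > _
    rw [show ((1 : ℝ) / 2) • (A1 + A2) = !![0, 1, 0; 1/2, 0, 1/2; 1/2, 1/2, 0] from mid_eq,
      val1, val2, val3]
    norm_num
  refine ⟨key, fun h => ?_⟩
  have := h A1 A2 (1/2) (by norm_num) (by norm_num)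
  have e : ((1:ℝ)/2) • A1 + (1 - (1:ℝ)/2) • A2 = ((1:ℝ)/2) • (A1 + A2) := by
    norm_num [smul_add]
  rw [e] at this
  linarith [key]
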